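/- Let f be a polynomial in n variables of degree at most D, ℓ ∈ ℕ, and x ∈ ℝⁿ. Then the ℓ-th derivative tensor of f at x satisfies ‖(1/ℓ!)·D^ℓ_x f‖_{∞,∞} ≤ binomial(D,ℓ)·‖f‖₁·max{1, ‖x‖_∞}^{D−ℓ}, where ‖A‖_{∞,∞} denotes the supremum of |A[v₁,…,v_ℓ]| over vectors vᵢ with ‖vᵢ‖_∞ ≤ 1. -/

import Mathlib

open MvPolynomial

/-- The 1-norm of a real multivariate polynomial: the sum of the absolute
values of its coefficients. -/
noncomputable def norm1 {n : ℕ} (f : MvPolynomial (Fin n) ℝ) : ℝ :=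
  ∑ α ∈ f.support, |f.coeff α|

lemma norm1_nonneg (f : MvPolynomial (Fin n) ℝ) : 0 ≤ norm1 f :=
  Finset.sum_nonneg fun _ _ => abs_nonneg _

lemma norm1_eq_superset (f : MvPolynomial (Fin n) ℝ) {s : Finset (Fin n →₀ ℕ)}
    (hs : f.support ⊆ s) : norm1 f = ∑ α ∈ s, |f.coeff α| := by
  refine Finset.sum_subset hs fun α _ hα => ?_
  simp [MvPolynomial.notMem_support_iff.1 hα]

lemma norm1_add_le (f g : MvPolynomial (Fin n) ℝ) : norm1 (f + g) ≤ norm1 f + norm1 g := by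
  have h1 : (f + g).support ⊆ f.support ∪ g.support := MvPolynomial.support_add
  rw [norm1_eq_superset (f + g) h1, norm1_eq_superset f (Finset.subset_union_left),
    norm1_eq_superset g (Finset.subset_union_right), ← Finset.sum_add_distrib]
  exact Finset.sum_le_sum fun α _ => by simpa [MvPolynomial.coeff_add] using abs_add_le _ _

lemma norm1_sum_le {ι : Type*} (s : Finset ι) (g : ι → MvPolynomial (Fin n) ℝ) :
    norm1 (∑ i ∈ s, g i) ≤ ∑ i ∈ s, norm1 (g i) := by
  classical
  induction s using Finset.induction_on with
  | empty => simp [norm1]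
  | @insert a s h ih =>
    rw [Finset.sum_insert h, Finset.sum_insert h]
    exact (norm1_add_le _ _).trans (by linarith)

lemma norm1_monomial_le (β : Fin n →₀ ℕ) (c : ℝ) : norm1 (monomial β c) ≤ |c| := by
  rcases eq_or_ne c 0 with rfl | hc
  · simp [norm1]
  · simp [norm1, MvPolynomial.support_monomial, hc]

lemma abs_eval_le (f : MvPolynomial (Fin n) ℝ) {D : ℕ} (hD : f.totalDegree ≤ D)
    (x : Fin n → ℝ) : |eval x f| ≤ norm1 f * max 1 ‖x‖ ^ D := by
  set M := max 1 ‖x‖ with hM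
  have hM1 : (1 : ℝ) ≤ M := le_max_left _ _
  have hM0 : (0 : ℝ) ≤ M := zero_le_one.trans hM1
  rw [MvPolynomial.eval_eq, norm1, Finset.sum_mul]
  refine (Finset.abs_sum_le_sum_abs _ _).trans (Finset.sum_le_sum fun d hd => ?_)
  rw [abs_mul]
  refine mul_le_mul_of_nonneg_left ?_ (abs_nonneg _)
  calc |∏ i ∈ d.support, x i ^ d i| ≤ ∏ i ∈ d.support, M ^ d i := by
        rw [Finset.abs_prod]
        refine Finset.prod_le_prod (fun _ _ => abs_nonneg _) fun i _ => ?_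
        rw [abs_pow]
        exact pow_le_pow_left₀ (abs_nonneg _) ((norm_le_pi_norm x i).trans (le_max_right _ _)) _
    _ = M ^ (∑ i ∈ d.support, d i) := Finset.prod_pow_eq_pow_sum _ _ _
    _ ≤ M ^ D := pow_le_pow_right₀ hM1 ((MvPolynomial.le_totalDegree hd).trans hD)

lemma pderiv_eq_sum (f : MvPolynomial (Fin n) ℝ) (i : Fin n) :
    pderiv i f = ∑ α ∈ f.support, monomial (α - Finsupp.single i 1) (coeff α f * α i) := by
  conv_lhs => rw [f.as_sum, map_sum]
  exact Finset.sum_congr rfl fun α _ => MvPolynomial.pderiv_monomial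

lemma sum_single_le {α : Fin n →₀ ℕ} {i : Fin n} (hi : 1 ≤ α i) :
    ((α - Finsupp.single i 1).sum fun _ e => e) + 1 = α.sum fun _ e => e := by
  classical
  rw [Finsupp.sum_fintype _ _ (fun _ => rfl), Finsupp.sum_fintype _ _ (fun _ => rfl)]
  simp only [Finsupp.tsub_apply]
  rw [Finset.sum_tsub_distrib]
  · have h1 : ∑ j, Finsupp.single i 1 j = 1 := by
      simp [Finsupp.single_apply, Finset.sum_ite_eq]
    rw [h1]
    have h2 : 1 ≤ ∑ j, α j := hi.trans (Finset.single_le_sum (fun _ _ => Nat.zero_le _)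
      (Finset.mem_univ i))
    omega
  · intro j _
    rcases eq_or_ne j i with rfl | h
    · simpa using hi
    · simp [Finsupp.single_apply, Ne.symm h]

lemma totalDegree_pderiv_le (f : MvPolynomial (Fin n) ℝ) (i : Fin n) {D : ℕ}
    (hD : f.totalDegree ≤ D + 1) : (pderiv i f).totalDegree ≤ D := by
  rw [pderiv_eq_sum]
  refine MvPolynomial.totalDegree_finsetSum_le fun α hα => ?_
  rcases Nat.eq_zero_or_pos (α i) with h0 | h1
  · simp [h0]
  · refine (MvPolynomial.totalDegree_monomial_le _ _).trans ?_
    have h3 := sum_single_le (α := α) (i := i) h1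
    have h4 : ((α - Finsupp.single i 1).sum fun _ ↦ id) = ((α - Finsupp.single i 1).sum fun _ e => e) := rfl
    rw [h4]
    have h2 : (α.sum fun _ e => e) ≤ D + 1 := (MvPolynomial.le_totalDegree hα).trans hD
    omega

lemma sum_norm1_pderiv_le (f : MvPolynomial (Fin n) ℝ) {D : ℕ} (hD : f.totalDegree ≤ D) :
    ∑ i : Fin n, norm1 (pderiv i f) ≤ D * norm1 f := by
  have h1 : ∀ i : Fin n, norm1 (pderiv i f) ≤ ∑ α ∈ f.support, |coeff α f| * α i := by
    intro i
    rw [pderiv_eq_sum]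
    refine (norm1_sum_le _ _).trans (Finset.sum_le_sum fun α _ => ?_)
    refine (norm1_monomial_le _ _).trans ?_
    rw [abs_mul, Nat.abs_cast]
  calc ∑ i : Fin n, norm1 (pderiv i f) ≤ ∑ i : Fin n, ∑ α ∈ f.support, |coeff α f| * α i :=
        Finset.sum_le_sum fun i _ => h1 i
    _ = ∑ α ∈ f.support, |coeff α f| * ∑ i : Fin n, (α i : ℝ) := by
        rw [Finset.sum_comm]
        exact Finset.sum_congr rfl fun α _ => by rw [Finset.mul_sum]
    _ ≤ ∑ α ∈ f.support, |coeff α f| * D := by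
        refine Finset.sum_le_sum fun α hα => mul_le_mul_of_nonneg_left ?_ (abs_nonneg _)
        have : ∑ i : Fin n, α i = α.sum fun _ e => e :=
          (Finsupp.sum_fintype α (fun _ e => e) fun _ => rfl).symm
        rw [← Nat.cast_sum]
        exact_mod_cast (by rw [this]; exact (MvPolynomial.le_totalDegree hα).trans hD : ∑ i : Fin n, α i ≤ D)
    _ = D * norm1 f := by rw [← Finset.sum_mul, norm1, mul_comm]

lemma contDiff_eval (f : MvPolynomial (Fin n) ℝ) {m : ℕ∞} :
    ContDiff ℝ m (fun y : Fin n → ℝ => eval y f) := by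
  have h := AnalyticOnNhd.eval_mvPolynomial (𝕜 := ℝ) f
  exact contDiff_iff_contDiffAt.2 fun x => (h x (Set.mem_univ x)).contDiffAt

lemma hasFDerivAt_eval (f : MvPolynomial (Fin n) ℝ) (x : Fin n → ℝ) :
    HasFDerivAt (fun y : Fin n → ℝ => eval y f)
      (∑ i : Fin n, eval x (pderiv i f) •
        ContinuousLinearMap.proj (R := ℝ) (φ := fun _ : Fin n => ℝ) i) x := by
  induction f using MvPolynomial.induction_on with
  | C a =>
    simp only [pderiv_C, map_zero, zero_smul, Finset.sum_const_zero, eval_C]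
    exact hasFDerivAt_const _ _
  | add p q hp hq =>
    simp only [map_add, eval_add, add_smul, Finset.sum_add_distrib]
    exact hp.add hq
  | mul_X p i hp =>
    have hXi := hasFDerivAt_apply (𝕜 := ℝ) i x
    have h := hp.mul' hXi
    have e : (∑ j : Fin n, eval x (pderiv j (p * X i)) •
          ContinuousLinearMap.proj (R := ℝ) (φ := fun _ : Fin n => ℝ) j)
        = eval x p • ContinuousLinearMap.proj i +
          (∑ j : Fin n, eval x (pderiv j p) •
            ContinuousLinearMap.proj (R := ℝ) (φ := fun _ : Fin n => ℝ) j).smulRight (x i) := by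
      ext v
      classical
      simp only [ContinuousLinearMap.sum_apply, ContinuousLinearMap.smul_apply,
        ContinuousLinearMap.proj_apply, ContinuousLinearMap.add_apply,
        ContinuousLinearMap.smulRight_apply, pderiv_mul, eval_add, eval_mul, eval_X, pderiv_X,
        smul_eq_mul, Pi.single_apply, apply_ite (eval x), map_one, map_zero, add_mul, ite_mul,
        one_mul, zero_mul, mul_ite, mul_one, mul_zero, Finset.sum_add_distrib, Finset.sum_ite_eq,
        Finset.mem_univ, if_true, Finset.sum_mul]
      rw [add_comm]
      congr 1
      exact Finset.sum_congr rfl fun j _ => by ring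
    rw [e]
    simp only [eval_mul, eval_X]
    exact h

lemma norm_proj_le (i : Fin n) :
    ‖ContinuousLinearMap.proj (R := ℝ) (φ := fun _ : Fin n => ℝ) i‖ ≤ 1 :=
  ContinuousLinearMap.opNorm_le_bound _ zero_le_one fun y => by
    simpa using (norm_le_pi_norm y i)

set_option synthInstance.maxHeartbeats 1000000 in
set_option maxHeartbeats 1600000 in
lemma key_bound (ℓ : ℕ) : ∀ (D : ℕ) (f : MvPolynomial (Fin n) ℝ), f.totalDegree ≤ D →
    ∀ x : Fin n → ℝ, ‖iteratedFDeriv ℝ ℓ (fun y : Fin n → ℝ => eval y f) x‖ ≤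
      (D.descFactorial ℓ : ℝ) * norm1 f * max 1 ‖x‖ ^ (D - ℓ) := by
  induction ℓ with
  | zero =>
    intro D f hD x
    rw [norm_iteratedFDeriv_zero]
    simpa [Real.norm_eq_abs] using abs_eval_le f hD x
  | succ ℓ ih =>
    intro D f hD x
    have hM1 : (1 : ℝ) ≤ max 1 ‖x‖ := le_max_left _ _
    have hM0 : (0 : ℝ) ≤ max 1 ‖x‖ := zero_le_one.trans hM1
    cases D with
    | zero =>
      have h0 : f.totalDegree = 0 := Nat.le_zero.mp hD
      have hconst : (fun y : Fin n → ℝ => eval y f) = fun _ => ∑ d ∈ f.support, coeff d f := by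
        funext y
        rw [MvPolynomial.eval_eq]
        refine Finset.sum_congr rfl fun d hd => ?_
        have hd0 : d = 0 := Finsupp.ext fun i =>
          (MvPolynomial.totalDegree_eq_zero_iff _ f).1 h0 d hd i
        subst hd0; simp
      rw [hconst, iteratedFDeriv_const_of_ne (Nat.succ_ne_zero ℓ)]
      simp only [Pi.zero_apply, norm_zero]
      have := norm1_nonneg f
      positivity
    | succ D =>
      rw [← norm_iteratedFDeriv_fderiv]
      have hfd : fderiv ℝ (fun y : Fin n → ℝ => eval y f) = fun y =>
          ∑ i : Fin n, eval y (pderiv i f) •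
            ContinuousLinearMap.proj (R := ℝ) (φ := fun _ : Fin n => ℝ) i :=
        funext fun y => (hasFDerivAt_eval f y).fderiv
      rw [hfd]
      have hcomp : ∀ i : Fin n, (fun y : Fin n → ℝ => eval y (pderiv i f) •
            ContinuousLinearMap.proj (R := ℝ) (φ := fun _ : Fin n => ℝ) i) =
          (ContinuousLinearMap.toSpanSingleton ℝ
            (ContinuousLinearMap.proj (R := ℝ) (φ := fun _ : Fin n => ℝ) i)) ∘
          (fun y : Fin n → ℝ => eval y (pderiv i f)) := by
        intro i
        funext y
        simp [ContinuousLinearMap.toSpanSingleton_apply]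
      have hcd : ∀ i : Fin n, ContDiff ℝ (ℓ : ℕ∞) (fun y : Fin n → ℝ => eval y (pderiv i f) •
          ContinuousLinearMap.proj (R := ℝ) (φ := fun _ : Fin n => ℝ) i) := by
        intro i
        rw [hcomp i]
        exact (ContinuousLinearMap.toSpanSingleton ℝ _).contDiff.comp (contDiff_eval _)
      rw [iteratedFDeriv_sum fun i _ => hcd i]
      simp only [Finset.sum_apply]
      refine (norm_sum_le _ _).trans ?_
      have hterm : ∀ i : Fin n, ‖iteratedFDeriv ℝ ℓ (fun y : Fin n → ℝ =>
            eval y (pderiv i f) •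
            ContinuousLinearMap.proj (R := ℝ) (φ := fun _ : Fin n => ℝ) i) x‖ ≤
          (D.descFactorial ℓ : ℝ) * norm1 (pderiv i f) * max 1 ‖x‖ ^ (D - ℓ) := by
        intro i
        rw [hcomp i, ContinuousLinearMap.iteratedFDeriv_comp_left _ ((contDiff_eval (m := ℓ) _).contDiffAt (x := x)) le_rfl]
        refine (ContinuousLinearMap.norm_compContinuousMultilinearMap_le _ _).trans ?_
        have h1 : ‖ContinuousLinearMap.toSpanSingleton ℝ
            (ContinuousLinearMap.proj (R := ℝ) (φ := fun _ : Fin n => ℝ) i)‖ ≤ 1 := by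
          rw [ContinuousLinearMap.norm_toSpanSingleton]
          exact norm_proj_le i
        calc ‖ContinuousLinearMap.toSpanSingleton ℝ _‖ *
              ‖iteratedFDeriv ℝ ℓ (fun y : Fin n → ℝ => eval y (pderiv i f)) x‖ ≤
            1 * ‖iteratedFDeriv ℝ ℓ (fun y : Fin n → ℝ => eval y (pderiv i f)) x‖ :=
              mul_le_mul_of_nonneg_right h1 (norm_nonneg _)
          _ = ‖iteratedFDeriv ℝ ℓ (fun y : Fin n → ℝ => eval y (pderiv i f)) x‖ := one_mul _
          _ ≤ _ := ih D (pderiv i f) (totalDegree_pderiv_le f i hD) x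
      refine (Finset.sum_le_sum fun i _ => hterm i).trans ?_
      have heq : ∑ i : Fin n, (D.descFactorial ℓ : ℝ) * norm1 (pderiv i f) * max 1 ‖x‖ ^ (D - ℓ)
          = (D.descFactorial ℓ : ℝ) * max 1 ‖x‖ ^ (D - ℓ) * ∑ i : Fin n, norm1 (pderiv i f) := by
        rw [Finset.mul_sum]
        exact Finset.sum_congr rfl fun i _ => by ring
      rw [heq]
      have hsum2 := sum_norm1_pderiv_le f hD
      calc (D.descFactorial ℓ : ℝ) * max 1 ‖x‖ ^ (D - ℓ) * ∑ i : Fin n, norm1 (pderiv i f)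
          ≤ (D.descFactorial ℓ : ℝ) * max 1 ‖x‖ ^ (D - ℓ) * ((D + 1) * norm1 f) := by
            refine mul_le_mul_of_nonneg_left (hsum2.trans ?_) (by positivity)
            push_cast; ring_nf; rfl
        _ = ((D + 1).descFactorial (ℓ + 1) : ℝ) * norm1 f * max 1 ‖x‖ ^ (D + 1 - (ℓ + 1)) := by
            rw [Nat.succ_descFactorial_succ, Nat.succ_sub_succ]
            push_cast; ring


/-- If `f` has degree at most `D`, then the `ℓ`-th derivative tensor of `f` at
`x` satisfies `‖(1/ℓ!)·D^ℓ_x f‖_{∞,∞} ≤ binom(D,ℓ)·‖f‖₁·max{1,‖x‖_∞}^(D−ℓ)`.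
The domain `Fin n → ℝ` carries the sup-norm, so the norm of the iterated
derivative (a continuous multilinear map) is exactly the `(∞,∞)`-spectral
norm. -/
theorem norm1_iteratedFDeriv_le {n : ℕ} (D ℓ : ℕ) (f : MvPolynomial (Fin n) ℝ)
    (hD : f.totalDegree ≤ D) (x : Fin n → ℝ) :
    (ℓ.factorial : ℝ)⁻¹ *
        ‖iteratedFDeriv ℝ ℓ (fun y : Fin n → ℝ => MvPolynomial.eval y f) x‖ ≤
      (D.choose ℓ : ℝ) * norm1 f * max 1 ‖x‖ ^ (D - ℓ) := by
  rw [inv_mul_le_iff₀ (by positivity : (0 : ℝ) < ℓ.factorial)]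
  refine (key_bound ℓ D f hD x).trans (le_of_eq ?_)
  rw [Nat.descFactorial_eq_factorial_mul_choose]
  push_cast; ring
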